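/- Let B, C, D, K, P, Q be positive real numbers with C ≤ 1 and C P K / D ≤ 1. If 8 B C^2 Q K^2 < (9D - CPK)√((D - CPK)(9D - CPK)) + 27 D^2 - 18 D C P K - C^2 P^2 K^2, then there is no pair (U, V) with U > 0, V > 0 satisfying B U (1 - U/K) = P U V + Q U V^2 and C(P U V + Q U V^2) = D V. -/

import Mathlib

set_option maxHeartbeats 1000000 in
/-- For positive `B, C, D, K, P, Q` with `C ≤ 1` and `CPK/D ≤ 1`,
if `8BC²QK² < (9D - CPK)√((D-CPK)(9D-CPK)) + 27D² - 18DCPK - C²P²K²`, then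
the non-scaled system has no positive equilibrium. -/
theorem no_positive_equilibrium_nonscaled (B C D K P Q : ℝ)
    (hB : 0 < B) (hC : 0 < C) (hD : 0 < D) (hK : 0 < K) (hP : 0 < P) (hQ : 0 < Q)
    (hC1 : C ≤ 1) (hR0 : C * P * K / D ≤ 1)
    (hcond : 8 * B * C ^ 2 * Q * K ^ 2 <
      (9 * D - C * P * K) * Real.sqrt ((D - C * P * K) * (9 * D - C * P * K)) +
        27 * D ^ 2 - 18 * D * C * P * K - C ^ 2 * P ^ 2 * K ^ 2) :
    ¬ ∃ U V : ℝ, 0 < U ∧ 0 < V ∧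
      B * U * (1 - U / K) = P * U * V + Q * U * V ^ 2 ∧
      C * (P * U * V + Q * U * V ^ 2) = D * V := by
  rintro ⟨U, V, hU, hV, h1, h2⟩
  obtain ⟨a, ha⟩ : ∃ a : ℝ, a = C * P * K := ⟨_, rfl⟩
  have ha0 : 0 < a := by rw [ha]; positivity
  have haD : a ≤ D := by
    rw [div_le_one hD] at hR0; rw [ha]; exact hR0
  obtain ⟨x, hx⟩ : ∃ x : ℝ, x = C * K * (P + Q * V) := ⟨_, rfl⟩
  have hxa : x - a = C * K * Q * V := by rw [hx, ha]; ring
  have hxapos : a < x := by nlinarith [mul_pos (mul_pos (mul_pos hC hK) hQ) hV]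
  have hxpos : 0 < x := lt_trans ha0 hxapos
  -- from h2, cancel V
  have h2' : C * U * (P + Q * V) = D := by
    have h : (C * U * (P + Q * V) - D) * V = 0 := by linear_combination h2
    rcases mul_eq_zero.1 h with h | h
    · linarith
    · exact absurd h (ne_of_gt hV)
  -- from h1, cancel U (clear the /K first)
  have h1' : B * (K - U) = K * V * (P + Q * V) := by
    have hK0 : (K : ℝ) ≠ 0 := ne_of_gt hK
    have h1K : B * U * (K - U) = K * (P * U * V + Q * U * V ^ 2) := by
      field_simp at h1
      linear_combination U * h1
    have h : (B * (K - U) - K * V * (P + Q * V)) * U = 0 := by linear_combination h1K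
    rcases mul_eq_zero.1 h with h | h
    · linarith
    · exact absurd h (ne_of_gt hU)
  obtain ⟨t, ht⟩ : ∃ t : ℝ, t = B * Q * C ^ 2 * K ^ 2 := ⟨_, rfl⟩
  have ht0 : 0 < t := by rw [ht]; positivity
  have key : t * (x - D) = x ^ 2 * (x - a) := by
    rw [ht, hx, ha]
    linear_combination (B * Q * C ^ 2 * K ^ 2) * h2' +
      (Q * C ^ 3 * K ^ 2 * (P + Q * V)) * h1'
  have hxD : D < x := by
    nlinarith [mul_pos (mul_pos hxpos hxpos) (sub_pos.2 hxapos)]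
  obtain ⟨r, hr⟩ : ∃ r : ℝ, r = Real.sqrt ((D - a) * (9 * D - a)) := ⟨_, rfl⟩
  have hr0 : 0 ≤ r := by rw [hr]; exact Real.sqrt_nonneg _
  have hr2 : r ^ 2 = (D - a) * (9 * D - a) := by
    rw [hr, sq, Real.mul_self_sqrt (by nlinarith)]
  have hM : 8 * t < (9 * D - a) * r + 27 * D ^ 2 - 18 * D * a - a ^ 2 := by
    rw [ht, hr, ha]
    linarith [hcond]
  -- factorization identity: the cubic 8x³-8ax²-Mx+MD has double root (3D+a+r)/4
  have hid : (4 * x - 3 * D - a - r) ^ 2 * (2 * x - a + 3 * D + r) =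
      4 * (8 * x ^ 3 - 8 * a * x ^ 2 -
        ((9 * D - a) * r + 27 * D ^ 2 - 18 * D * a - a ^ 2) * x +
        ((9 * D - a) * r + 27 * D ^ 2 - 18 * D * a - a ^ 2) * D) := by
    linear_combination (r + (2 * x - a + 3 * D) - 2 * (4 * x - 3 * D - a)) * hr2
  have hprod : (0:ℝ) ≤ (4 * x - 3 * D - a - r) ^ 2 * (2 * x - a + 3 * D + r) :=
    mul_nonneg (sq_nonneg _) (by nlinarith)
  have hineq : ((9 * D - a) * r + 27 * D ^ 2 - 18 * D * a - a ^ 2) * (x - D) ≤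
      8 * (x ^ 2 * (x - a)) := by nlinarith [hid, hprod]
  have h8 : 8 * t * (x - D) < ((9 * D - a) * r + 27 * D ^ 2 - 18 * D * a - a ^ 2) * (x - D) :=
    mul_lt_mul_of_pos_right hM (sub_pos.2 hxD)
  linarith [key, h8, hineq]
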